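/- For any set of desirable options D, D is total if and only if the binary set of desirable option sets K_D is total, i.e., D is coherent and satisfies 'for all nonzero u, u ∈ D or −u ∈ D' if and only if K_D is coherent and contains {u, −u} for all nonzero u. -/

import Mathlib

/-- Axiom K0: removal of the zero option. -/
def AxK0 {V : Type*} [AddCommGroup V] [Module ℝ V] (K : Set (Set V)) : Prop :=
  ∀ A ∈ K, A \ {0} ∈ K

/-- Axiom K1: the singleton of zero is not a desirable option set. -/
def AxK1 {V : Type*} [AddCommGroup V] [Module ℝ V] (K : Set (Set V)) : Prop :=
  ({0} : Set V) ∉ K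

/-- Axiom K2: singletons of (background-)positive options are desirable option sets. -/
def AxK2 {V : Type*} [AddCommGroup V] [Module ℝ V] (Vpos : Set V) (K : Set (Set V)) : Prop :=
  ∀ u ∈ Vpos, ({u} : Set V) ∈ K

/-- Axiom K3: closure under elementwise positive combinations of two members. -/
def AxK3 {V : Type*} [AddCommGroup V] [Module ℝ V] (K : Set (Set V)) : Prop :=
  ∀ A1 ∈ K, ∀ A2 ∈ K, ∀ l m : V → V → ℝ,
    (∀ u ∈ A1, ∀ v ∈ A2, 0 ≤ l u v ∧ 0 ≤ m u v ∧ 0 < l u v + m u v) →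
    {w : V | ∃ u ∈ A1, ∃ v ∈ A2, w = l u v • u + m u v • v} ∈ K

/-- Axiom K4: upward closure under inclusion (within finite option sets). -/
def AxK4 {V : Type*} [AddCommGroup V] [Module ℝ V] (K : Set (Set V)) : Prop :=
  ∀ A1 ∈ K, ∀ A2 : Set V, A2.Finite → A1 ⊆ A2 → A2 ∈ K

/-- Coherence of a set of desirable option sets (a subset of the finite option sets). -/
def CoherentK {V : Type*} [AddCommGroup V] [Module ℝ V] (Vpos : Set V)
    (K : Set (Set V)) : Prop :=
  (∀ A ∈ K, A.Finite) ∧ AxK0 K ∧ AxK1 K ∧ AxK2 Vpos K ∧ AxK3 K ∧ AxK4 K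

/-- Coherence of a set of desirable options. -/
def CoherentD {V : Type*} [AddCommGroup V] [Module ℝ V] (Vpos D : Set V) : Prop :=
  (0 : V) ∉ D ∧ Vpos ⊆ D ∧
  ∀ u ∈ D, ∀ v ∈ D, ∀ l m : ℝ, 0 ≤ l → 0 ≤ m → 0 < l + m → l • u + m • v ∈ D

/-- `K_D`: the binary set of desirable option sets generated by `D`. -/
def KD {V : Type*} [AddCommGroup V] [Module ℝ V] (D : Set V) : Set (Set V) :=
  {A | A.Finite ∧ (A ∩ D).Nonempty}

/-- `D_K`: the set of options whose singletons belong to `K`. -/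
def DK {V : Type*} [AddCommGroup V] [Module ℝ V] (K : Set (Set V)) : Set V :=
  {u | ({u} : Set V) ∈ K}

/-- A set of desirable option sets is binary if it is determined by singleton assessments. -/
def BinaryK {V : Type*} [AddCommGroup V] [Module ℝ V] (K : Set (Set V)) : Prop :=
  ∀ A : Set V, A.Finite → (A ∈ K ↔ ∃ u ∈ A, ({u} : Set V) ∈ K)

/-- `posi S`: all finite positive linear combinations of elements of `S`. -/
def Posi {V : Type*} [AddCommGroup V] [Module ℝ V] (S : Set V) : Set V :=
  {w | ∃ n : ℕ, 0 < n ∧ ∃ (l : Fin n → ℝ) (u : Fin n → V),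
    (∀ k, 0 < l k) ∧ (∀ k, u k ∈ S) ∧ w = ∑ k, l k • u k}

/-- Total set of desirable options. -/
def TotalD {V : Type*} [AddCommGroup V] [Module ℝ V] (Vpos D : Set V) : Prop :=
  CoherentD Vpos D ∧ ∀ u : V, u ≠ 0 → u ∈ D ∨ -u ∈ D

/-- Total set of desirable option sets. -/
def TotalK {V : Type*} [AddCommGroup V] [Module ℝ V] (Vpos : Set V)
    (K : Set (Set V)) : Prop :=
  CoherentK Vpos K ∧ ∀ u : V, u ≠ 0 → ({u, -u} : Set V) ∈ K

/-- Mixing set of desirable options. -/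
def MixingD {V : Type*} [AddCommGroup V] [Module ℝ V] (Vpos D : Set V) : Prop :=
  CoherentD Vpos D ∧ ∀ A : Set V, A.Finite → (Posi A ∩ D).Nonempty → (A ∩ D).Nonempty

/-- Mixing set of desirable option sets. -/
def MixingK {V : Type*} [AddCommGroup V] [Module ℝ V] (Vpos : Set V)
    (K : Set (Set V)) : Prop :=
  CoherentK Vpos K ∧
    ∀ A B : Set V, A.Finite → B ∈ K → A ⊆ B → B ⊆ Posi A → A ∈ K

/-- `V_{≤0}`: the non-positive options (zero together with the strictly negative options). -/
def Vneg {V : Type*} [AddCommGroup V] [Module ℝ V] (Vpos : Set V) : Set V :=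
  {u | u = 0 ∨ -u ∈ Vpos}

/-- The operator `RN`, adding smaller option sets by removing non-positive options. -/
def RN {V : Type*} [AddCommGroup V] [Module ℝ V] (Vpos : Set V)
    (K : Set (Set V)) : Set (Set V) :=
  {A | A.Finite ∧ ∃ B ∈ K, B \ Vneg Vpos ⊆ A ∧ A ⊆ B}

theorem stmt10 {V : Type*} [AddCommGroup V] [Module ℝ V]
    (Vpos D : Set V) :
    TotalD Vpos D ↔ TotalK Vpos (KD D) := by
  constructor
  · rintro ⟨⟨h0, hpos, hclose⟩, htot⟩
    refine ⟨⟨fun A hA => hA.1, ?_, ?_, ?_, ?_, ?_⟩, ?_⟩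
    · rintro A ⟨hAf, u, hu, huD⟩
      exact ⟨hAf.diff, u, ⟨hu, fun h => h0 (h ▸ huD)⟩, huD⟩
    · rintro ⟨-, u, hu, huD⟩
      exact h0 (hu ▸ huD)
    · intro u hu
      exact ⟨Set.finite_singleton u, u, rfl, hpos hu⟩
    · rintro A1 ⟨hA1f, u, hu, huD⟩ A2 ⟨hA2f, v, hv, hvD⟩ l m hlm
      constructor
      · have : {w : V | ∃ u ∈ A1, ∃ v ∈ A2, w = l u v • u + m u v • v}
            ⊆ Set.image2 (fun u v => l u v • u + m u v • v) A1 A2 := by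
          rintro w ⟨a, ha, b, hb, rfl⟩
          exact ⟨a, ha, b, hb, rfl⟩
        exact Set.Finite.subset (Set.Finite.image2 _ hA1f hA2f) this
      · obtain ⟨hl, hm, hs⟩ := hlm u hu v hv
        exact ⟨l u v • u + m u v • v, ⟨u, hu, v, hv, rfl⟩,
          hclose u huD v hvD _ _ hl hm hs⟩
    · rintro A1 ⟨-, u, hu, huD⟩ A2 hA2f hsub
      exact ⟨hA2f, u, hsub hu, huD⟩
    · intro u hu
      refine ⟨((Set.finite_singleton (-u)).insert u), ?_⟩
      rcases htot u hu with h | h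
      · exact ⟨u, Set.mem_insert _ _, h⟩
      · exact ⟨-u, Set.mem_insert_of_mem _ rfl, h⟩
  · rintro ⟨⟨-, hK0, hK1, hK2, hK3, hK4⟩, htot⟩
    refine ⟨⟨?_, ?_, ?_⟩, ?_⟩
    · intro h0
      exact hK1 ⟨Set.finite_singleton 0, 0, rfl, h0⟩
    · intro u hu
      obtain ⟨-, v, hv, hvD⟩ := hK2 u hu
      rwa [Set.mem_singleton_iff.mp hv] at hvD
    · intro u hu v hv l m hl hm hs
      have h1 : ({u} : Set V) ∈ KD D := ⟨Set.finite_singleton u, u, rfl, hu⟩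
      have h2 : ({v} : Set V) ∈ KD D := ⟨Set.finite_singleton v, v, rfl, hv⟩
      have := hK3 _ h1 _ h2 (fun _ _ => l) (fun _ _ => m)
        (fun _ _ _ _ => ⟨hl, hm, hs⟩)
      obtain ⟨-, w, ⟨a, ha, b, hb, rfl⟩, hwD⟩ := this
      rw [Set.mem_singleton_iff.mp ha, Set.mem_singleton_iff.mp hb] at hwD
      exact hwD
    · intro u hu
      obtain ⟨-, w, hw, hwD⟩ := htot u hu
      rcases hw with h | h
      · exact Or.inl (h ▸ hwD)
      · exact Or.inr ((Set.mem_singleton_iff.mp h) ▸ hwD)
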